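/- Let n, m₁ ≥ 1, m₂ be positive integers, let c ∈ ℝⁿ with c ≠ 0, let x¹, …, x^K ∈ ℝⁿ be finitely many observations, let x⁰ be a preferred observation, i.e., x⁰ ∈ {x¹,…,x^K} and c·x⁰ ≤ c·xᵏ for all k = 1, …, K, and let G ∈ ℝ^{m₂×n}, h ∈ ℝ^{m₂}. Then there exist A ∈ ℝ^{m₁×n}, b, y ∈ ℝ^{m₁}, and w ∈ ℝ^{m₂} such that: A xᵏ ≥ b componentwise for every k = 1, …, K; c·x⁰ = b·y + h·w; Aᵀy + Gᵀw = c; and every row aᵢ of A has Euclidean norm ‖aᵢ‖ = 1. (In fact one may take w = 0, y = (‖c‖, 0, …, 0), aᵢ = c/‖c‖ for all i, and bᵢ = (c·x⁰)/‖c‖.) -/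

import Mathlib

open Matrix BigOperators

/-- Proposition 2: the feasible region of the multi-point inverse optimization
problem `MIO` is non-empty.  Given a cost vector `c ≠ 0`, observations
`x 1, …, x K`, a preferred observation `x0` (one of the observations, attaining the
minimum objective value), and known constraint data `G`, `h`, there exist
`A`, `b`, `y`, `w` satisfying primal feasibility `A xᵏ ≥ b` for every observation,
strong duality `c·x0 = b·y + h·w`, dual feasibility `Aᵀ y + Gᵀ w = c`, and
Euclidean normalization `‖aᵢ‖ = 1` of each row of `A`. -/
theorem multi_point_MIO_feasible
    (n m₁ m₂ K : ℕ) (hn : 0 < n) (hm₁ : 0 < m₁) (hm₂ : 0 < m₂)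
    (c : Fin n → ℝ) (hc : c ≠ 0)
    (x : Fin K → Fin n → ℝ) (x0 : Fin n → ℝ)
    (hx0mem : ∃ k : Fin K, x k = x0)
    (hx0pref : ∀ k : Fin K, c ⬝ᵥ x0 ≤ c ⬝ᵥ x k)
    (G : Matrix (Fin m₂) (Fin n) ℝ) (h : Fin m₂ → ℝ) :
    ∃ (A : Matrix (Fin m₁) (Fin n) ℝ) (b y : Fin m₁ → ℝ) (w : Fin m₂ → ℝ),
      (∀ (k : Fin K) (i : Fin m₁), b i ≤ (A *ᵥ x k) i) ∧
      c ⬝ᵥ x0 = b ⬝ᵥ y + h ⬝ᵥ w ∧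
      Aᵀ *ᵥ y + Gᵀ *ᵥ w = c ∧
      (∀ i : Fin m₁, Real.sqrt (∑ j, (A i j) ^ 2) = 1) := by
  set N : ℝ := Real.sqrt (∑ j, (c j) ^ 2) with hN
  have hsum : (0 : ℝ) < ∑ j, (c j) ^ 2 := by
    obtain ⟨j, hj⟩ := Function.ne_iff.mp hc
    exact Finset.sum_pos' (fun i _ => sq_nonneg _)
      ⟨j, Finset.mem_univ j, by
        have hj' : c j ≠ 0 := by simpa using hj
        positivity⟩
  have hNpos : 0 < N := Real.sqrt_pos.mpr hsum
  have hNsq : N ^ 2 = ∑ j, (c j) ^ 2 := Real.sq_sqrt hsum.le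
  have hNne : N ≠ 0 := ne_of_gt hNpos
  let i0 : Fin m₁ := ⟨0, hm₁⟩
  refine ⟨fun _ j => c j / N, fun _ => (c ⬝ᵥ x0) / N,
    fun i => if i = i0 then N else 0, 0, ?_, ?_, ?_, ?_⟩
  · intro k i
    have : c ⬝ᵥ x0 ≤ c ⬝ᵥ x k := hx0pref k
    have hk : (c ⬝ᵥ x0) / N ≤ (c ⬝ᵥ x k) / N := by
      exact (div_le_div_iff_of_pos_right hNpos).mpr this
    simpa [Matrix.mulVec, dotProduct, div_mul_eq_mul_div,
      ← Finset.sum_div] using hk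
  · simp only [dotProduct, Pi.zero_apply, mul_zero, Finset.sum_const_zero,
      add_zero, mul_ite, mul_zero, Finset.sum_ite_eq', Finset.mem_univ, if_true]
    rw [div_mul_cancel₀ _ hNne]
  · funext j
    simp only [Pi.add_apply, Matrix.mulVec, dotProduct, Matrix.transpose_apply,
      Pi.zero_apply, mul_zero, Finset.sum_const_zero, add_zero, mul_ite, mul_zero,
      Finset.sum_ite_eq', Finset.mem_univ, if_true]
    change c j / N * N = c j
    rw [div_mul_cancel₀ _ hNne]
  · intro i
    have : ∑ j, (c j / N) ^ 2 = 1 := by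
      simp only [div_pow, ← Finset.sum_div, ← hNsq]
      exact div_self (pow_ne_zero 2 hNne)
    rw [this, Real.sqrt_one]
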